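/- Let η : ℝ → ℝ³ be defined by η̇(t) = (p(t), 0, F(x(t))) where F(x) = a₀ + (a₂/2)x², and (p(t), x(t)) solves ẋ = p, ṗ = -F(x)F'(x) with p(t)² + F(x(t))² = 1. Then ‖η̇(t)‖ = 1 for all t, and the (signed) curvature of the planar curve t ↦ (x-component, z-component) of η, namely κ(t) = ẋ z̈ - ẍ ż computed from (p(t), F(x(t))), equals a₂ x(t); i.e., η̈(t) = a₂ x(t) · (-F(x(t)), 0, p(t)). -/

import Mathlib

/-- Euler–Elastica property of the projected geodesic: with
`F(y) = a₀ + (a₂/2)y²`, `ẋ = p`, `ṗ = -F(x)·a₂x`, energy `p² + F(x)² = 1`, and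
`η̇ = (p, 0, F(x))`, the curve `η` is unit speed and
`η̈(t) = a₂x(t)·(-F(x(t)), 0, p(t))`. -/
theorem stmt12 (a₀ a₂ : ℝ) (F : ℝ → ℝ) (x p : ℝ → ℝ) (η : ℝ → ℝ × ℝ × ℝ)
    (hF : ∀ y, F y = a₀ + a₂ / 2 * y ^ 2)
    (hx : ∀ t, HasDerivAt x (p t) t)
    (hp : ∀ t, HasDerivAt p (-(F (x t)) * (a₂ * x t)) t)
    (henergy : ∀ t, (p t) ^ 2 + (F (x t)) ^ 2 = 1)
    (hη : ∀ t, HasDerivAt η (p t, (0:ℝ), F (x t)) t) :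
    ∀ t : ℝ,
      Real.sqrt ((p t) ^ 2 + (0:ℝ) ^ 2 + (F (x t)) ^ 2) = 1 ∧
      HasDerivAt (fun s => (p s, (0:ℝ), F (x s)))
        (a₂ * x t * (-(F (x t))), (0:ℝ), a₂ * x t * p t) t := by
  intro t
  constructor
  · have h := henergy t
    rw [show (p t) ^ 2 + (0:ℝ) ^ 2 + (F (x t)) ^ 2 = 1 by linarith]
    exact Real.sqrt_one
  · have hFx : HasDerivAt (fun s => F (x s)) (a₂ * x t * p t) t := by
      have h : HasDerivAt (fun s => a₀ + a₂ / 2 * (x s) ^ 2) (a₂ / 2 * ((2:ℕ) * x t ^ (2-1) * p t)) t :=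
        (((hx t).pow 2).const_mul (a₂/2)).const_add a₀
      have e : a₂ / 2 * ((2:ℕ) * x t ^ (2-1) * p t) = a₂ * x t * p t := by push_cast; ring
      rw [e] at h
      simpa only [hF] using h
    have hp' : HasDerivAt p (a₂ * x t * (-(F (x t)))) t := by
      have := hp t; convert this using 1; ring
    exact HasDerivAt.prodMk hp' (HasDerivAt.prodMk (hasDerivAt_const t (0:ℝ)) hFx)
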